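/- There exists a finite semifield D with exactly 64 elements whose automorphism group is trivial: the only bijective map D → D that is both additive and multiplicative is the identity. -/

import Mathlib

/-- A finite semifield: a finite nonassociative ring with identity in which
the product of any two nonzero elements is nonzero. -/
structure FiniteSemifield where
  D : Type
  [addGroup : AddCommGroup D]
  mul : D → D → D
  one : D
  finite : Finite D
  mul_add : ∀ a b c : D, mul a (b + c) = mul a b + mul a c
  add_mul : ∀ a b c : D, mul (a + b) c = mul a c + mul b c
  one_mul : ∀ a : D, mul one a = a
  mul_one : ∀ a : D, mul a one = a
  one_ne_zero : one ≠ (0 : D)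
  noZeroDiv : ∀ a b : D, mul a b = 0 → a = 0 ∨ b = 0

attribute [instance] FiniteSemifield.addGroup

namespace SF64

/-- GF(8) modeled as (ZMod 2)^3 with basis 1, t, t², t³ = t + 1. -/
abbrev F : Type := ZMod 2 × ZMod 2 × ZMod 2

/-- Multiplication of GF(8). -/
def fmul (a b : F) : F :=
  (a.1 * b.1 + a.2.1 * b.2.2 + a.2.2 * b.2.1,
   a.1 * b.2.1 + a.2.1 * b.1 + a.2.1 * b.2.2 + a.2.2 * b.2.1 + a.2.2 * b.2.2,
   a.1 * b.2.2 + a.2.1 * b.2.1 + a.2.2 * b.1 + a.2.2 * b.2.2)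

/-- Frobenius squaring in GF(8). -/
def sq (a : F) : F := fmul a a

/-- The element t of GF(8). -/
def tE : F := (0, 1, 0)

/-- The semifield of order 64, set-theoretically GF(8) × GF(8). -/
abbrev D : Type := F × F

/-- Knuth-type semifield multiplication:
(a,b)∘(c,d) = (ac + b·d², ad + b·c² + t·(b·d²)). -/
def mul (p q : D) : D :=
  (fmul p.1 q.1 + fmul p.2 (sq q.2),
   fmul p.1 q.2 + fmul p.2 (sq q.1) + fmul tE (fmul p.2 (sq q.2)))

def one : D := ((1, 0, 0), (0, 0, 0))

lemma fmul_add : ∀ a b c : F, fmul a (b + c) = fmul a b + fmul a c := by decide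
lemma add_fmul : ∀ a b c : F, fmul (a + b) c = fmul a c + fmul b c := by decide
lemma sq_add : ∀ a b : F, sq (a + b) = sq a + sq b := by decide

lemma mul_add' : ∀ a b c : D, mul a (b + c) = mul a b + mul a c := by
  intro a b c
  simp only [mul, Prod.fst_add, Prod.snd_add, sq_add, fmul_add, Prod.mk_add_mk, Prod.mk.injEq]
  exact ⟨by abel, by abel⟩

lemma add_mul' : ∀ a b c : D, mul (a + b) c = mul a c + mul b c := by
  intro a b c
  simp only [mul, Prod.fst_add, Prod.snd_add, add_fmul, fmul_add, Prod.mk_add_mk, Prod.mk.injEq]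
  exact ⟨by abel, by abel⟩

lemma one_mul' : ∀ a : D, mul one a = a := by decide
lemma mul_one' : ∀ a : D, mul a one = a := by decide
set_option synthInstance.maxHeartbeats 1000000 in
set_option synthInstance.maxSize 2000 in
set_option maxRecDepth 4000 in
lemma noZeroDiv' : ∀ a b : D, mul a b = 0 → a = 0 ∨ b = 0 := by decide

/-- The semifield as a `FiniteSemifield`. -/
def S : FiniteSemifield where
  D := D
  mul := mul
  one := one
  finite := inferInstance
  mul_add := mul_add'
  add_mul := add_mul'
  one_mul := one_mul'
  mul_one := mul_one'
  one_ne_zero := by decide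
  noZeroDiv := noZeroDiv'

/-- The generator element x = (0, 1). -/
def x : D := ((0, 0, 0), (1, 0, 0))

/-- scalar selection: `mysmul c v = v` if `c = 1`, else `0`. -/
def mysmul (c : ZMod 2) (v : D) : D := if c = 1 then v else 0

/-- Coordinates of a with respect to the basis x, x∘x, x∘(x∘x), ... -/
def c1 (a : D) : ZMod 2 := a.1.2.1 + a.2.1 + a.2.2.2
def c2 (a : D) : ZMod 2 := a.1.2.2 + a.2.2.1 + a.2.2.2
def c3 (a : D) : ZMod 2 := a.1.1 + a.2.2.1
def c4 (a : D) : ZMod 2 := a.2.2.2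
def c5 (a : D) : ZMod 2 := a.1.2.1
def c6 (a : D) : ZMod 2 := a.1.1 + a.1.2.1 + a.1.2.2 + a.2.2.1 + a.2.2.2

/-- The candidate automorphism determined by the image y of the generator x. -/
def T (y : D) (a : D) : D :=
  mysmul (c1 a) y + mysmul (c2 a) (mul y y) + mysmul (c3 a) (mul y (mul y y)) +
    mysmul (c4 a) (mul y (mul y (mul y y))) +
    mysmul (c5 a) (mul y (mul y (mul y (mul y y)))) +
    mysmul (c6 a) (mul y (mul y (mul y (mul y (mul y y)))))

lemma decomp : ∀ a : D, T x a = a := by decide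

/-- The witness element used to rule out all nontrivial candidates. -/
def p : D := ((0, 0, 0), (0, 1, 0))

lemma x_ne_zero : x ≠ (0 : D) := by decide

lemma key : ∀ y : D, y ≠ 0 → T y (mul p p) = mul (T y p) (T y p) → y = x := by decide

end SF64

/-- There exists a finite semifield of order 64 whose automorphism group is trivial. -/
theorem exists_semifield64_trivial_automorphism_group :
    ∃ S : FiniteSemifield, Nat.card S.D = 64 ∧
      ∀ φ : S.D ≃+ S.D,
        (∀ a b : S.D, φ (S.mul a b) = S.mul (φ a) (φ b)) →
        φ = AddEquiv.refl S.D := by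
  refine ⟨SF64.S, ?_, ?_⟩
  · show Nat.card SF64.D = 64
    rw [Nat.card_eq_fintype_card]; rfl
  · intro φ hm'
    have hm : ∀ a b : SF64.D, φ (SF64.mul a b) = SF64.mul (φ a) (φ b) := hm'
    set y : SF64.D := φ SF64.x with hy
    -- φ sends the chain x, x∘x, ... to the corresponding chain on y
    have hsel : ∀ (c : ZMod 2) (v : SF64.D), φ (SF64.mysmul c v) = SF64.mysmul c (φ v) := by
      intro c v
      unfold SF64.mysmul
      split
      · rename_i h; exact (if_pos h).symm
      · rename_i h; exact (map_zero φ).trans (if_neg h).symm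
    have hφ : ∀ a : SF64.D, φ a = SF64.T y a := by
      intro a
      have := SF64.decomp a
      conv_lhs => rw [← this]
      unfold SF64.T
      have hadd : ∀ u w : SF64.D, φ (u + w) = φ u + φ w := fun u w => map_add φ u w
      simp only [hadd, hsel]
      have h2 : φ (SF64.mul SF64.x SF64.x) = SF64.mul y y := by rw [hm]
      have h3 : φ (SF64.mul SF64.x (SF64.mul SF64.x SF64.x)) = SF64.mul y (SF64.mul y y) := by
        rw [hm, h2]
      have h4 : φ (SF64.mul SF64.x (SF64.mul SF64.x (SF64.mul SF64.x SF64.x)))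
          = SF64.mul y (SF64.mul y (SF64.mul y y)) := by rw [hm, h3]
      have h5 : φ (SF64.mul SF64.x (SF64.mul SF64.x (SF64.mul SF64.x (SF64.mul SF64.x SF64.x))))
          = SF64.mul y (SF64.mul y (SF64.mul y (SF64.mul y y))) := by rw [hm, h4]
      have h6 : φ (SF64.mul SF64.x (SF64.mul SF64.x (SF64.mul SF64.x
            (SF64.mul SF64.x (SF64.mul SF64.x SF64.x)))))
          = SF64.mul y (SF64.mul y (SF64.mul y (SF64.mul y (SF64.mul y y)))) := by rw [hm, h5]
      rw [h2, h3, h4, h5, h6]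
      rfl
    have hy0 : y ≠ 0 := fun h =>
      absurd ((φ.injective (h.trans (map_zero φ).symm)) : SF64.x = (0 : SF64.D))
        SF64.x_ne_zero
    have hw : SF64.T y (SF64.mul SF64.p SF64.p)
        = SF64.mul (SF64.T y SF64.p) (SF64.T y SF64.p) := by
      simp only [← hφ]; exact hm _ _
    have hyx : y = SF64.x := SF64.key y hy0 hw
    ext a
    rw [hφ a, hyx, SF64.decomp a]
    rfl
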